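/- Let B be a d×d positive definite real matrix, C a d×d positive semidefinite real matrix, and κ > 0. If det(B + C) ≤ (1 + κ)·det(B), then xᵀ C x ≤ κ · xᵀ B x for every x ∈ ℝ^d; i.e., C ⪯ κ B in the Loewner order. -/

import Mathlib

open Matrix Finset

/-- If `B ≻ 0`, `C ⪰ 0`, `κ > 0` and `det(B + C) ≤ (1 + κ) det(B)`, then
`xᵀCx ≤ κ xᵀBx` for all `x`, i.e. `C ⪯ κ B` in the Loewner order. -/
theorem stmt4 {d : ℕ} (B C : Matrix (Fin d) (Fin d) ℝ) (κ : ℝ)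
    (hB : B.PosDef) (hC : C.PosSemidef) (hκ : 0 < κ)
    (hdet : (B + C).det ≤ (1 + κ) * B.det) :
    (∀ x : Fin d → ℝ, x ⬝ᵥ C *ᵥ x ≤ κ * (x ⬝ᵥ B *ᵥ x)) ∧ (κ • B - C).PosSemidef := by
  classical
  set S := (open scoped MatrixOrder in CFC.sqrt B) with hSdef
  have hS : S.PosSemidef := by open scoped MatrixOrder in exact (CFC.sqrt_nonneg B).posSemidef
  have hSS : S * S = B := by open scoped MatrixOrder in exact CFC.sqrt_mul_sqrt_self B hB.posSemidef.nonneg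
  have hdetS : IsUnit S.det := by
    have h : S.det * S.det = B.det := by rw [← det_mul, hSS]
    refine isUnit_iff_ne_zero.mpr fun h0 => ?_
    rw [h0, mul_zero] at h
    exact hB.det_pos.ne' h.symm
  have hSinv : S * S⁻¹ = 1 := mul_nonsing_inv _ hdetS
  have hSinv' : S⁻¹ * S = 1 := nonsing_inv_mul _ hdetS
  have hSinvH : (S⁻¹)ᴴ = S⁻¹ := hS.isHermitian.inv
  set M := S⁻¹ * C * S⁻¹ with hMdef
  have hM : M.PosSemidef := by
    have := hC.mul_mul_conjTranspose_same S⁻¹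
    rwa [hSinvH] at this
  have hCM : S * M * S = C := by
    rw [hMdef]
    rw [show S * (S⁻¹ * C * S⁻¹) * S = (S * S⁻¹) * C * (S⁻¹ * S) by
      simp only [Matrix.mul_assoc]]
    rw [hSinv, hSinv', Matrix.one_mul, Matrix.mul_one]
  have hBM : B + C = S * (1 + M) * S := by
    rw [Matrix.mul_add, Matrix.add_mul, Matrix.mul_one, hSS, hCM]
  -- determinant reduction
  have hdet1M : (1 + M).det ≤ 1 + κ := by
    have h1 : (B + C).det = B.det * (1 + M).det := by
      rw [hBM, det_mul, det_mul, ← hSS, det_mul]; ring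
    rw [h1] at hdet
    have := hB.det_pos
    nlinarith
  -- spectral theorem for M
  have hMh := hM.isHermitian
  set U : Matrix (Fin d) (Fin d) ℝ := (hMh.eigenvectorUnitary : Matrix (Fin d) (Fin d) ℝ) with hUdef
  set μ := hMh.eigenvalues with hμdef
  have hUU : U * star U = 1 := by
    exact (Matrix.mem_unitaryGroup_iff).mp hMh.eigenvectorUnitary.2
  have hspec : M = U * diagonal μ * star U := by
    have := hMh.spectral_theorem
    rwa [Unitary.conjStarAlgAut_apply, RCLike.ofReal_real_eq_id, Function.id_comp] at this
  have hμ0 : ∀ i, 0 ≤ μ i := hM.eigenvalues_nonneg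
  -- each eigenvalue is at most κ
  have hμκ : ∀ j, μ j ≤ κ := by
    intro j
    have hdetdiag : (1 + M).det = ∏ i, (1 + μ i) := by
      have h1M : (1 : Matrix (Fin d) (Fin d) ℝ) + M
          = U * diagonal (fun i => 1 + μ i) * star U := by
        have hone : (1 : Matrix (Fin d) (Fin d) ℝ) = U * diagonal (fun _ => (1:ℝ)) * star U := by
          rw [diagonal_one, Matrix.mul_one, hUU]
        rw [hspec]
        nth_rewrite 1 [hone]
        rw [← Matrix.add_mul, ← Matrix.mul_add, diagonal_add]
      rw [h1M, det_mul, det_mul, mul_right_comm, ← det_mul, hUU, det_one, one_mul,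
        det_diagonal]
    have hprod : ∏ i, (1 + μ i) ≤ 1 + κ := by rw [← hdetdiag]; exact hdet1M
    have hsingle : 1 + μ j ≤ ∏ i, (1 + μ i) := by
      rw [← Finset.prod_erase_mul _ _ (Finset.mem_univ j)]
      have h1 : (1:ℝ) ≤ ∏ i ∈ Finset.univ.erase j, (1 + μ i) := by
        have h2 : ∏ _i ∈ Finset.univ.erase j, (1:ℝ) ≤ ∏ i ∈ Finset.univ.erase j, (1 + μ i) :=
          Finset.prod_le_prod (fun i _ => by norm_num) (fun i _ => by linarith [hμ0 i])
        rwa [Finset.prod_const_one] at h2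
      nlinarith [hμ0 j]
    linarith
  -- κ • 1 - M is PSD
  have hKM : (κ • (1 : Matrix (Fin d) (Fin d) ℝ) - M).PosSemidef := by
    have heq : κ • (1 : Matrix (Fin d) (Fin d) ℝ) - M
        = U * diagonal (fun i => κ - μ i) * star U := by
      have hone : κ • (1 : Matrix (Fin d) (Fin d) ℝ)
          = U * diagonal (fun _ => κ) * star U := by
        have hdk : (diagonal (fun _ => κ) : Matrix (Fin d) (Fin d) ℝ)
            = κ • (1 : Matrix (Fin d) (Fin d) ℝ) := by
          ext i k
          rcases eq_or_ne i k with h | h <;> simp [h, Matrix.one_apply]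
        rw [hdk, Matrix.mul_smul, Matrix.smul_mul, Matrix.mul_one, hUU]
      rw [hspec, hone, ← Matrix.sub_mul, ← Matrix.mul_sub, diagonal_sub]
    rw [heq]
    have hd : (diagonal (fun i => κ - μ i) : Matrix (Fin d) (Fin d) ℝ).PosSemidef :=
      posSemidef_diagonal_iff.mpr fun i => by linarith [hμκ i]
    have := hd.mul_mul_conjTranspose_same U
    rwa [← Matrix.star_eq_conjTranspose] at this
  -- transfer back: κ • B - C = S * (κ • 1 - M) * S
  have hmain : (κ • B - C).PosSemidef := by
    have heq : κ • B - C = S * (κ • (1 : Matrix (Fin d) (Fin d) ℝ) - M) * S := by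
      rw [Matrix.mul_sub, Matrix.sub_mul, hCM, Matrix.mul_smul, Matrix.smul_mul,
        Matrix.mul_one, hSS]
    rw [heq]
    have := hKM.mul_mul_conjTranspose_same S
    rwa [hS.isHermitian.eq] at this
  refine ⟨fun x => ?_, hmain⟩
  have h := hmain.dotProduct_mulVec_nonneg x
  simp only [star_trivial, sub_mulVec, dotProduct_sub, smul_mulVec,
    dotProduct_smul, smul_eq_mul] at h
  linarith
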